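/- Feasibility characterization: a Lipschitz function w on [0,s_f] satisfies the constraints μ⁻ ≤ w ≤ μ⁺ and α⁻ ≤ w' ≤ α⁺ a.e. if and only if μ⁻ ≤ w ≤ μ⁺ and M̄(w) = w. -/

import Mathlib

open MeasureTheory Set

/-- `A(y,x) = ∫_y^x α⁺` if `y ≤ x`, and `∫_x^y (−α⁻)` if `y > x`. -/
noncomputable def A2 (αp αm : ℝ → ℝ) (y x : ℝ) : ℝ :=
  if y ≤ x then ∫ t in y..x, αp t else ∫ t in x..y, (-αm t)

/-- The meet operator `M̄(w)(x) = inf_{y ∈ [0,s_f]} { w(y) + A(y,x) }`. -/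
noncomputable def Mbar (sf : ℝ) (αp αm : ℝ → ℝ) (w : ℝ → ℝ) : ℝ → ℝ :=
  fun x => sInf {z : ℝ | ∃ y ∈ Icc (0:ℝ) sf, z = w y + A2 αp αm y x}

open Filter Topology intervalIntegral IsUnifLocDoublingMeasure

lemma lip_deriv_abs_le {K : NNReal} {g : ℝ → ℝ} (hg : LipschitzWith K g) (t : ℝ) :
    |deriv g t| ≤ K := by
  have h1 : ‖fderiv ℝ g t‖ ≤ K := norm_fderiv_le_of_lipschitz ℝ hg
  rw [← Real.norm_eq_abs]
  calc ‖deriv g t‖ = ‖fderiv ℝ g t 1‖ := rfl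
    _ ≤ ‖fderiv ℝ g t‖ * ‖(1:ℝ)‖ := ContinuousLinearMap.le_opNorm _ _
    _ ≤ K := by simpa using h1

lemma lip_deriv_intervalIntegrable {K : NNReal} {g : ℝ → ℝ} (hg : LipschitzWith K g)
    (a b : ℝ) : IntervalIntegrable (fun t => deriv g t) volume a b := by
  rw [intervalIntegrable_iff]
  refine Integrable.mono' (g := fun _ => (K:ℝ))
    (integrableOn_const (C := (K:ℝ)) (hs := measure_Ioc_lt_top.ne))
    ((measurable_deriv g).aestronglyMeasurable.restrict) ?_
  exact Eventually.of_forall fun t => by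
    simpa [Real.norm_eq_abs] using lip_deriv_abs_le hg t

lemma lip_ftc {K : NNReal} {g : ℝ → ℝ} (hg : LipschitzWith K g) (a b : ℝ) :
    g b - g a = ∫ t in a..b, deriv g t := by
  have hcont : Continuous g := hg.continuous
  have hgi : ∀ u v : ℝ, IntervalIntegrable g volume u v := fun u v =>
    hcont.intervalIntegrable u v
  set h : ℕ → ℝ := fun n => (n + 1 : ℝ)⁻¹ with hh
  have hpos : ∀ n, 0 < h n := fun n => by positivity
  have hto : Tendsto h atTop (𝓝 0) := by
    simpa [hh, one_div] using tendsto_one_div_add_atTop_nhds_zero_nat (𝕜 := ℝ)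
  have hne : Tendsto h atTop (𝓝[≠] 0) :=
    tendsto_nhdsWithin_of_tendsto_nhds_of_eventually_within _ hto
      (Eventually.of_forall fun n => (hpos n).ne')
  have hGlim : ∀ x : ℝ, Tendsto (fun n => (h n)⁻¹ * ∫ t in x..(x + h n), g t) atTop (𝓝 (g x)) := by
    intro x
    have hG : HasDerivAt (fun u => ∫ t in x..u, g t) (g x) x :=
      integral_hasDerivAt_right (hgi x x) (hcont.stronglyMeasurableAtFilter _ _)
        hcont.continuousAt
    have := hG.tendsto_slope_zero.comp hne
    simp only [Function.comp_def, smul_eq_mul] at this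
    refine this.congr fun n => ?_
    rw [intervalIntegral.integral_same]
    ring_nf
  have hlim : ∀ᵐ t : ℝ ∂volume, Tendsto (fun n => (g (t + h n) - g t) / h n) atTop
      (𝓝 (deriv g t)) := by
    filter_upwards [hg.ae_differentiableAt_real] with t ht
    have := (ht.hasDerivAt).tendsto_slope_zero.comp hne
    simp only [Function.comp_def, smul_eq_mul] at this
    exact this.congr fun n => by rw [div_eq_inv_mul]
  have hmeas : ∀ n : ℕ, AEStronglyMeasurable (fun t => (g (t + h n) - g t) / h n)
      (volume.restrict (uIoc a b)) :=
    fun n => (((hcont.comp (continuous_add_right (h n))).sub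
      hcont).div_const _).aestronglyMeasurable.restrict
  have hbd : ∀ n : ℕ, ∀ᵐ t : ℝ ∂volume, t ∈ uIoc a b →
      ‖(g (t + h n) - g t) / h n‖ ≤ (K : ℝ) := by
    intro n
    refine Eventually.of_forall fun t _ => ?_
    rw [Real.norm_eq_abs, abs_div, abs_of_pos (hpos n), div_le_iff₀ (hpos n)]
    calc |g (t + h n) - g t| ≤ K * dist (t + h n) t := hg.dist_le_mul _ _
      _ = K * h n := by rw [Real.dist_eq, add_sub_cancel_left, abs_of_pos (hpos n)]
  have hDCT := intervalIntegral.tendsto_integral_filter_of_dominated_convergence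
    (μ := volume) (a := a) (b := b) (F := fun n t => (g (t + h n) - g t) / h n)
    (f := fun t => deriv g t) (fun _ => (K : ℝ))
    (Eventually.of_forall hmeas) (Eventually.of_forall hbd)
    (intervalIntegrable_const)
    (by filter_upwards [hlim] with t ht _ using ht)
  have key : ∀ n : ℕ, (∫ t in a..b, (g (t + h n) - g t) / h n)
      = (h n)⁻¹ * (∫ t in b..(b + h n), g t) - (h n)⁻¹ * ∫ t in a..(a + h n), g t := by
    intro n
    set c := h n
    have hi1 : IntervalIntegrable (fun t => g (t + c)) volume a b := by
      simpa [Function.comp_def] using (hcont.comp (continuous_add_right c)).intervalIntegrable a b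
    have e1 : (∫ t in a..b, (g (t + c) - g t) / c)
        = ((∫ t in a..b, g (t + c)) - ∫ t in a..b, g t) / c := by
      rw [intervalIntegral.integral_div]
      congr 1
      exact intervalIntegral.integral_sub hi1 (hgi a b)
    have e2 : (∫ t in a..b, g (t + c)) = ∫ t in (a+c)..(b+c), g t :=
      intervalIntegral.integral_comp_add_right g c
    have c1 : (∫ t in (a+c)..b, g t) + ∫ t in b..(b+c), g t = ∫ t in (a+c)..(b+c), g t :=
      intervalIntegral.integral_add_adjacent_intervals (hgi _ _) (hgi _ _)
    have c2 : (∫ t in a..(a+c), g t) + ∫ t in (a+c)..b, g t = ∫ t in a..b, g t :=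
      intervalIntegral.integral_add_adjacent_intervals (hgi _ _) (hgi _ _)
    rw [e1, e2]
    field_simp
    congr 1
    linarith
  have hR : Tendsto (fun n => ∫ t in a..b, (g (t + h n) - g t) / h n) atTop
      (𝓝 (g b - g a)) := by
    simp only [key]
    exact (hGlim b).sub (hGlim a)
  exact tendsto_nhds_unique hR hDCT

lemma avg_Icc_eq {sf y s : ℝ} (α : ℝ → ℝ) (hy : 0 < y) (hys : y < s) (hs : s ≤ sf) :
    ⨍ t in Icc y s, ((Ioc (0:ℝ) sf).indicator α) t ∂volume
      = (s - y)⁻¹ * ∫ t in y..s, α t := by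
  rw [setAverage_eq, Real.volume_real_Icc, max_eq_left (by linarith), smul_eq_mul]
  congr 1
  rw [setIntegral_congr_fun measurableSet_Icc
    (fun t ht => Set.indicator_of_mem
      (show t ∈ Ioc (0:ℝ) sf from ⟨lt_of_lt_of_le hy ht.1, le_trans ht.2 hs⟩) α),
    integral_Icc_eq_integral_Ioc, intervalIntegral.integral_of_le hys.le]

/-- Feasibility characterization: a Lipschitz `w` satisfies `μ⁻ ≤ w ≤ μ⁺` and
`α⁻ ≤ w' ≤ α⁺` a.e. iff `μ⁻ ≤ w ≤ μ⁺` and `M̄(w) = w`. -/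
theorem stmt_16 (sf : ℝ) (hsf : 0 < sf) (αp αm μm μp w : ℝ → ℝ) (K : NNReal)
    (hip : IntervalIntegrable αp volume 0 sf)
    (him : IntervalIntegrable αm volume 0 sf)
    (hp : ∀ s ∈ Icc (0:ℝ) sf, 0 ≤ αp s)
    (hm : ∀ s ∈ Icc (0:ℝ) sf, αm s ≤ 0)
    (hμm0 : ∀ s ∈ Icc (0:ℝ) sf, 0 ≤ μm s)
    (hw : LipschitzOnWith K w (Icc (0:ℝ) sf)) :
    ((∀ s ∈ Icc (0:ℝ) sf, μm s ≤ w s ∧ w s ≤ μp s) ∧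
      (∀ᵐ s ∂volume, s ∈ Icc (0:ℝ) sf →
        αm s ≤ derivWithin w (Icc (0:ℝ) sf) s ∧
        derivWithin w (Icc (0:ℝ) sf) s ≤ αp s))
    ↔ ((∀ s ∈ Icc (0:ℝ) sf, μm s ≤ w s ∧ w s ≤ μp s) ∧
      (∀ x ∈ Icc (0:ℝ) sf, Mbar sf αp αm w x = w x)) := by
  obtain ⟨g, hgK, hgw⟩ := hw.extend_real
  have hwg : ∀ x ∈ Icc (0:ℝ) sf, w x = g x := fun x hx => hgw hx
  have hA0 : ∀ x : ℝ, A2 αp αm x x = 0 := fun x => by simp [A2]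
  have h0 : ∀ᵐ t : ℝ ∂volume, t ≠ (0:ℝ) := by simp [ae_iff, not_not, Real.volume_singleton]
  have h1 : ∀ᵐ t : ℝ ∂volume, t ≠ sf := by simp [ae_iff, not_not, Real.volume_singleton]
  constructor
  · rintro ⟨hμ, hder⟩
    refine ⟨hμ, fun x hx => ?_⟩
    have hae : ∀ᵐ s : ℝ ∂volume, s ∈ Ioo (0:ℝ) sf → αm s ≤ deriv g s ∧ deriv g s ≤ αp s := by
      filter_upwards [hder] with s hs hio
      have hsI : s ∈ Icc (0:ℝ) sf := Ioo_subset_Icc_self hio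
      have hnb : Icc (0:ℝ) sf ∈ 𝓝 s := Icc_mem_nhds hio.1 hio.2
      have heq : w =ᶠ[𝓝 s] g := by filter_upwards [hnb] with t ht using hgw ht
      have hdd : derivWithin w (Icc (0:ℝ) sf) s = deriv g s := by
        rw [derivWithin_of_mem_nhds hnb, heq.deriv_eq]
      obtain ⟨h1', h2'⟩ := hs hsI
      rw [hdd] at h1' h2'
      exact ⟨h1', h2'⟩
    have hkey : ∀ a b : ℝ, a ∈ Icc (0:ℝ) sf → b ∈ Icc (0:ℝ) sf → a ≤ b →
        (∫ t in a..b, αm t) ≤ w b - w a ∧ w b - w a ≤ ∫ t in a..b, αp t := by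
      intro a b ha hb hab
      have hsub : uIcc a b ⊆ uIcc (0:ℝ) sf := by
        rw [uIcc_of_le hab, uIcc_of_le hsf.le]; exact Icc_subset_Icc ha.1 hb.2
      have haem : ∀ᵐ t ∂volume.restrict (Icc a b), αm t ≤ deriv g t ∧ deriv g t ≤ αp t := by
        have hcomb := hae.and (h0.and h1)
        refine (ae_restrict_of_ae hcomb).mp ((ae_restrict_mem measurableSet_Icc).mono ?_)
        rintro t htab ⟨himp, ht0, htsf⟩
        exact himp ⟨lt_of_le_of_ne (le_trans ha.1 htab.1) (Ne.symm ht0),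
          lt_of_le_of_ne (le_trans htab.2 hb.2) htsf⟩
      rw [hwg a ha, hwg b hb, lip_ftc hgK a b]
      constructor
      · exact intervalIntegral.integral_mono_ae_restrict hab (him.mono_set hsub)
          (lip_deriv_intervalIntegrable hgK a b) (haem.mono fun t ht => ht.1)
      · exact intervalIntegral.integral_mono_ae_restrict hab
          (lip_deriv_intervalIntegrable hgK a b) (hip.mono_set hsub)
          (haem.mono fun t ht => ht.2)
    have hub : ∀ y ∈ Icc (0:ℝ) sf, w x ≤ w y + A2 αp αm y x := by
      intro y hy
      by_cases hyx : y ≤ x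
      · have h2 := (hkey y x hy hx hyx).2
        rw [A2, if_pos hyx]; linarith
      · push_neg at hyx
        have h1' := (hkey x y hx hy hyx.le).1
        rw [A2, if_neg (not_le.2 hyx), intervalIntegral.integral_neg]
        linarith
    have hmem : w x ∈ {z : ℝ | ∃ y ∈ Icc (0:ℝ) sf, z = w y + A2 αp αm y x} :=
      ⟨x, hx, by rw [hA0, add_zero]⟩
    refine le_antisymm ?_ ?_
    · exact csInf_le ⟨w x, by rintro z ⟨y, hy, rfl⟩; exact hub y hy⟩ hmem
    · exact le_csInf ⟨_, hmem⟩ (by rintro z ⟨y, hy, rfl⟩; exact hub y hy)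
  · rintro ⟨hμ, hM⟩
    refine ⟨hμ, ?_⟩
    obtain ⟨m, hmI, hmmin'⟩ := isCompact_Icc.exists_isMinOn (nonempty_Icc.2 hsf.le)
      hw.continuousOn
    have hmmin : ∀ y ∈ Icc (0:ℝ) sf, w m ≤ w y := fun y hy => hmmin' hy
    have hA2nn : ∀ x ∈ Icc (0:ℝ) sf, ∀ y ∈ Icc (0:ℝ) sf, 0 ≤ A2 αp αm y x := by
      intro x hx y hy
      rw [A2]
      split_ifs with hyx
      · exact intervalIntegral.integral_nonneg hyx fun u hu =>
          hp u ⟨le_trans hy.1 hu.1, le_trans hu.2 hx.2⟩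
      · push_neg at hyx
        exact intervalIntegral.integral_nonneg hyx.le fun u hu => by
          have := hm u ⟨le_trans hx.1 hu.1, le_trans hu.2 hy.2⟩; linarith
    have hub : ∀ x ∈ Icc (0:ℝ) sf, ∀ y ∈ Icc (0:ℝ) sf, w x ≤ w y + A2 αp αm y x := by
      intro x hx y hy
      rw [← hM x hx]
      refine csInf_le ⟨w m, ?_⟩ ⟨y, hy, rfl⟩
      rintro z ⟨y', hy', rfl⟩
      have hm1 := hmmin y' hy'
      have hm2 := hA2nn x hx y' hy'
      linarith
    have hkey : ∀ a b : ℝ, a ∈ Icc (0:ℝ) sf → b ∈ Icc (0:ℝ) sf → a ≤ b →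
        (∫ t in a..b, αm t) ≤ w b - w a ∧ w b - w a ≤ ∫ t in a..b, αp t := by
      intro a b ha hb hab
      constructor
      · rcases eq_or_lt_of_le hab with rfl | hab'
        · simp
        · have h1' := hub a ha b hb
          rw [A2, if_neg (not_le.2 hab'), intervalIntegral.integral_neg] at h1'
          linarith
      · have h2' := hub b hb a ha
        rw [A2, if_pos hab] at h2'
        linarith
    have hαpL : LocallyIntegrable ((Ioc (0:ℝ) sf).indicator αp) volume :=
      (hip.1.integrable_indicator measurableSet_Ioc).locallyIntegrable
    have hαmL : LocallyIntegrable ((Ioc (0:ℝ) sf).indicator αm) volume :=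
      (him.1.integrable_indicator measurableSet_Ioc).locallyIntegrable
    filter_upwards [(vitaliFamily (volume : Measure ℝ) 1).ae_tendsto_average hαpL,
      (vitaliFamily (volume : Measure ℝ) 1).ae_tendsto_average hαmL, h0, h1]
      with s hsp hsm hs0 hssf hsI
    have hso : s ∈ Ioo (0:ℝ) sf :=
      ⟨lt_of_le_of_ne hsI.1 (Ne.symm hs0), lt_of_le_of_ne hsI.2 hssf⟩
    by_cases hdiff : DifferentiableWithinAt ℝ w (Icc (0:ℝ) sf) s
    swap
    · rw [derivWithin_zero_of_not_differentiableWithinAt hdiff]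
      exact ⟨hm s hsI, hp s hsI⟩
    · set d := derivWithin w (Icc (0:ℝ) sf) s with hdd
      have hdW : HasDerivWithinAt w d (Icc (0:ℝ) sf) s := hdiff.hasDerivWithinAt
      have hslope : Tendsto (slope w s) (𝓝[Icc (0:ℝ) sf \ {s}] s) (𝓝 d) :=
        hasDerivWithinAt_iff_tendsto_slope.1 hdW
      constructor
      · -- αm s ≤ d, via left intervals
        have hEq : 𝓝[Ioo (0:ℝ) s] s = 𝓝[<] s := by
          rw [show Ioo (0:ℝ) s = Iio s ∩ Ioi 0 by rw [inter_comm, Ioi_inter_Iio],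
            nhdsWithin_inter_of_mem']
          exact mem_nhdsWithin_of_mem_nhds (Ioi_mem_nhds hso.1)
        have hsub : Ioo (0:ℝ) s ⊆ Icc (0:ℝ) sf \ {s} := fun t ht =>
          ⟨⟨ht.1.le, le_trans ht.2.le hsI.2⟩, ne_of_lt ht.2⟩
        have hslopeL : Tendsto (slope w s) (𝓝[<] s) (𝓝 d) := by
          rw [← hEq]
          exact hslope.mono_left (nhdsWithin_mono _ hsub)
        have havgL : Tendsto (fun y => ⨍ t in Icc y s, ((Ioc (0:ℝ) sf).indicator αm) t)
            (𝓝[<] s) (𝓝 (((Ioc (0:ℝ) sf).indicator αm) s)) :=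
          hsm.comp (Real.tendsto_Icc_vitaliFamily_left s)
        have hαm's : ((Ioc (0:ℝ) sf).indicator αm) s = αm s :=
          Set.indicator_of_mem (show s ∈ Ioc (0:ℝ) sf from ⟨hso.1, hsI.2⟩) αm
        rw [← hαm's]
        refine le_of_tendsto_of_tendsto havgL hslopeL ?_
        have hmem : Ioo (0:ℝ) s ∈ 𝓝[<] s := by rw [← hEq]; exact self_mem_nhdsWithin
        filter_upwards [hmem] with y hy
        have hyI : y ∈ Icc (0:ℝ) sf := ⟨hy.1.le, le_trans hy.2.le hsI.2⟩
        have hk := (hkey y s hyI hsI hy.2.le).1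
        have hslope_eq : slope w s y = (s - y)⁻¹ * (w s - w y) := by
          rw [slope_def_field, show y - s = -(s - y) by ring,
            show w y - w s = -(w s - w y) by ring, neg_div_neg_eq, div_eq_inv_mul]
        rw [avg_Icc_eq αm hy.1 hy.2 hsI.2, hslope_eq]
        exact mul_le_mul_of_nonneg_left (by linarith) (inv_nonneg.2 (by linarith [hy.1, hy.2]))
      · -- d ≤ αp s, via right intervals
        have hEq : 𝓝[Ioo s sf] s = 𝓝[>] s := by
          rw [← Ioi_inter_Iio, nhdsWithin_inter_of_mem']
          exact mem_nhdsWithin_of_mem_nhds (Iio_mem_nhds hso.2)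
        have hsub : Ioo s sf ⊆ Icc (0:ℝ) sf \ {s} := fun t ht =>
          ⟨⟨le_trans hsI.1 ht.1.le, ht.2.le⟩, ne_of_gt ht.1⟩
        have hslopeR : Tendsto (slope w s) (𝓝[>] s) (𝓝 d) := by
          rw [← hEq]
          exact hslope.mono_left (nhdsWithin_mono _ hsub)
        have havgR : Tendsto (fun y => ⨍ t in Icc s y, ((Ioc (0:ℝ) sf).indicator αp) t)
            (𝓝[>] s) (𝓝 (((Ioc (0:ℝ) sf).indicator αp) s)) :=
          hsp.comp (Real.tendsto_Icc_vitaliFamily_right s)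
        have hαp's : ((Ioc (0:ℝ) sf).indicator αp) s = αp s :=
          Set.indicator_of_mem (show s ∈ Ioc (0:ℝ) sf from ⟨hso.1, hsI.2⟩) αp
        rw [← hαp's]
        refine le_of_tendsto_of_tendsto hslopeR havgR ?_
        have hmem : Ioo s sf ∈ 𝓝[>] s := by rw [← hEq]; exact self_mem_nhdsWithin
        filter_upwards [hmem] with y hy
        have hyI : y ∈ Icc (0:ℝ) sf := ⟨le_trans hsI.1 hy.1.le, hy.2.le⟩
        have hk := (hkey s y hsI hyI hy.1.le).2
        rw [avg_Icc_eq αp hso.1 hy.1 hyI.2, slope_def_field, div_eq_inv_mul]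
        exact mul_le_mul_of_nonneg_left (by linarith) (inv_nonneg.2 (by linarith [hy.1, hy.2]))
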